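/- Let m be a positive integer, T > 0, and let Υ : [0,T] → (m×m real matrices) be Lebesgue measurable with Υ_t symmetric for every t and with uniformly bounded entries. If the set of t ∈ [0,T] at which Υ_t is not positive semidefinite has positive Lebesgue measure, then the infimum of ∫₀ᵀ u(t)ᵀ Υ_t u(t) dt over all bounded Lebesgue-measurable u : [0,T] → ℝ^m equals −∞. -/

import Mathlib

open Matrix MeasureTheory

/-- Quantitative necessity: if `Υ_t` fails to be positive semidefinite on a set of
positive Lebesgue measure in `[0,T]`, then the infimum of `∫₀ᵀ uᵀΥu dt` over
bounded measurable `u` is `−∞`. -/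
theorem quadratic_integral_unbounded_below
    (m : ℕ) (hm : 0 < m) (T : ℝ) (hT : 0 < T)
    (Υ : ℝ → Matrix (Fin m) (Fin m) ℝ)
    (hΥmeas : ∀ i j, Measurable fun t => Υ t i j)
    (hΥsym : ∀ t, (Υ t)ᵀ = Υ t)
    (hΥbd : ∃ Cb : ℝ, ∀ t i j, |Υ t i j| ≤ Cb)
    (hpos : 0 < volume {t | t ∈ Set.Icc (0:ℝ) T ∧ ¬ (Υ t).PosSemidef}) :
    ∀ r : ℝ, ∃ u : ℝ → Fin m → ℝ, Measurable u ∧ (∃ Cu : ℝ, ∀ t, ‖u t‖ ≤ Cu) ∧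
      (∫ t in Set.Icc (0:ℝ) T, (u t) ⬝ᵥ (Υ t *ᵥ u t)) < r := by
  classical
  intro r
  obtain ⟨Cb, hCb⟩ := hΥbd
  -- the quadratic form is measurable in t for each fixed vector
  have fmeas : ∀ v : Fin m → ℝ, Measurable fun t => v ⬝ᵥ (Υ t *ᵥ v) := by
    intro v
    simp only [dotProduct, Matrix.mulVec]
    exact Finset.measurable_sum _ fun i _ =>
      (measurable_const.mul (Finset.measurable_sum _ fun j _ =>
        (hΥmeas i j).mul measurable_const))
  -- Step 1: at each bad time there is a rational vector with negative form
  have key : ∀ t, t ∈ Set.Icc (0:ℝ) T → ¬ (Υ t).PosSemidef →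
      ∃ q : Fin m → ℚ, ((fun i => (q i : ℝ)) ⬝ᵥ (Υ t *ᵥ fun i => (q i : ℝ))) < 0 := by
    intro t ht hnps
    have herm : (Υ t).IsHermitian := by
      unfold Matrix.IsHermitian
      ext i j
      simp only [Matrix.conjTranspose_apply, star_trivial]
      exact congrFun (congrFun (hΥsym t) i) j
    have hx : ∃ x : Fin m → ℝ, x ⬝ᵥ (Υ t *ᵥ x) < 0 := by
      by_contra h
      push_neg at h
      exact hnps (Matrix.posSemidef_iff_dotProduct_mulVec.mpr ⟨herm, fun x => by simpa using h x⟩)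
    obtain ⟨x, hx⟩ := hx
    have hc : Continuous fun y : Fin m → ℝ => y ⬝ᵥ (Υ t *ᵥ y) :=
      continuous_id.dotProduct (continuous_const.matrix_mulVec continuous_id)
    have hU : IsOpen {y : Fin m → ℝ | y ⬝ᵥ (Υ t *ᵥ y) < 0} :=
      isOpen_lt hc continuous_const
    have hdense : Dense (Set.range fun q : Fin m → ℚ => fun i => (q i : ℝ)) := by
      have h1 : Dense (Set.pi Set.univ fun _ : Fin m => Set.range ((↑) : ℚ → ℝ)) :=
        dense_pi Set.univ fun i _ => Rat.denseRange_cast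
      refine h1.mono ?_
      intro y hy
      choose q hq using fun i => hy i (Set.mem_univ i)
      exact ⟨q, funext hq⟩
    obtain ⟨z, hz, hzU⟩ := hdense.exists_mem_open hU ⟨x, hx⟩
    obtain ⟨q, rfl⟩ := hz
    exact ⟨q, hzU⟩
  -- Step 2: some rational direction is bad on a set of positive measure
  set A : (Fin m → ℚ) → Set ℝ := fun q =>
    {t | t ∈ Set.Icc (0:ℝ) T ∧ ((fun i => (q i : ℝ)) ⬝ᵥ (Υ t *ᵥ fun i => (q i : ℝ))) < 0}
    with hAdef
  have hAmeas : ∀ q, MeasurableSet (A q) := fun q =>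
    measurableSet_Icc.inter ((fmeas _) measurableSet_Iio)
  have hsub : {t | t ∈ Set.Icc (0:ℝ) T ∧ ¬ (Υ t).PosSemidef} ⊆ ⋃ q, A q := by
    rintro t ⟨ht, hnps⟩
    obtain ⟨q, hq⟩ := key t ht hnps
    exact Set.mem_iUnion.2 ⟨q, ht, hq⟩
  have hexq : ∃ q, 0 < volume (A q) := by
    by_contra h
    push_neg at h
    have h0 : volume (⋃ q, A q) = 0 :=
      measure_iUnion_null fun q => le_antisymm (h q) zero_le
    exact absurd (measure_mono_null hsub h0) hpos.ne'
  obtain ⟨q, hq⟩ := hexq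
  set v : Fin m → ℝ := fun i => (q i : ℝ) with hv
  set f : ℝ → ℝ := fun t => v ⬝ᵥ (Υ t *ᵥ v) with hfdef
  -- Step 3: the form is ≤ -ε on a positive measure subset
  set Bn : ℕ → Set ℝ := fun n => {t | t ∈ Set.Icc (0:ℝ) T ∧ f t ≤ -(1/((n:ℝ)+1))} with hBndef
  have hBnmeas : ∀ n, MeasurableSet (Bn n) := fun n =>
    measurableSet_Icc.inter ((fmeas v) measurableSet_Iic)
  have hAsub : A q ⊆ ⋃ n, Bn n := by
    rintro t ⟨ht, hft⟩
    obtain ⟨n, hn⟩ := exists_nat_one_div_lt (neg_pos.2 hft)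
    exact Set.mem_iUnion.2 ⟨n, ht, by linarith⟩
  have hexn : ∃ n, 0 < volume (Bn n) := by
    by_contra h
    push_neg at h
    have h0 : volume (⋃ n, Bn n) = 0 :=
      measure_iUnion_null fun n => le_antisymm (h n) zero_le
    exact absurd (measure_mono_null hAsub h0) hq.ne'
  obtain ⟨n, hn⟩ := hexn
  set ε : ℝ := 1/((n:ℝ)+1) with hεdef
  have hε : 0 < ε := by positivity
  set B : Set ℝ := Bn n with hBdef
  have hBmeas : MeasurableSet B := hBnmeas n
  have hBsub : B ⊆ Set.Icc (0:ℝ) T := fun t ht => ht.1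
  have hBneg : ∀ t ∈ B, f t ≤ -ε := fun t ht => ht.2
  have hBfin : volume B < ⊤ :=
    lt_of_le_of_lt (measure_mono hBsub) (by rw [Real.volume_Icc]; exact ENNReal.ofReal_lt_top)
  set μB : ℝ := (volume B).toReal with hμBdef
  have hμB : 0 < μB := ENNReal.toReal_pos hn.ne' hBfin.ne
  -- Step 4: the function u
  set c : ℝ := Real.sqrt ((|r| + 1)/(ε * μB)) with hcdef
  have hc2 : c^2 = (|r| + 1)/(ε * μB) := Real.sq_sqrt (by positivity)
  refine ⟨fun t => if t ∈ B then c • v else 0, ?_, ⟨‖c • v‖, ?_⟩, ?_⟩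
  · exact Measurable.ite hBmeas measurable_const measurable_const
  · intro t
    by_cases ht : t ∈ B <;> simp [ht, norm_nonneg]
  · -- the integral estimate
    have hgeq : ∀ t, ((if t ∈ B then c • v else 0) ⬝ᵥ (Υ t *ᵥ if t ∈ B then c • v else 0))
        = Set.indicator B (fun s => c^2 * f s) t := by
      intro t
      by_cases ht : t ∈ B
      · rw [if_pos ht, Set.indicator_of_mem ht, Matrix.mulVec_smul, smul_dotProduct,
          dotProduct_smul, smul_eq_mul, smul_eq_mul, hfdef]
        ring
      · simp [ht]
    -- bound on f
    set C : ℝ := ∑ i : Fin m, |v i| * ∑ j : Fin m, Cb * |v j| with hCdef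
    have hfb : ∀ t, |f t| ≤ C := by
      intro t
      rw [hfdef]
      simp only [dotProduct, Matrix.mulVec]
      calc |∑ i, v i * ∑ j, Υ t i j * v j|
          ≤ ∑ i, |v i * ∑ j, Υ t i j * v j| := Finset.abs_sum_le_sum_abs _ _
        _ = ∑ i, |v i| * |∑ j, Υ t i j * v j| := by simp [abs_mul]
        _ ≤ C := by
            rw [hCdef]
            refine Finset.sum_le_sum fun i _ => ?_
            refine mul_le_mul_of_nonneg_left ?_ (abs_nonneg _)
            calc |∑ j, Υ t i j * v j| ≤ ∑ j, |Υ t i j * v j| := Finset.abs_sum_le_sum_abs _ _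
              _ ≤ ∑ j, Cb * |v j| := Finset.sum_le_sum fun j _ => by
                  rw [abs_mul]; exact mul_le_mul_of_nonneg_right (hCb t i j) (abs_nonneg _)
    have hintf : IntegrableOn (fun t => c^2 * f t) B volume := by
      refine Integrable.mono' (g := fun _ => c^2 * C)
        (integrableOn_const hBfin.ne) ?_ ?_
      · exact ((fmeas v).const_mul _).aestronglyMeasurable
      · filter_upwards with t
        rw [Real.norm_eq_abs, abs_mul, abs_pow, sq_abs]
        exact mul_le_mul_of_nonneg_left (hfb t) (sq_nonneg c)
    have h1 : (∫ t in Set.Icc (0:ℝ) T,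
        ((if t ∈ B then c • v else 0) ⬝ᵥ (Υ t *ᵥ if t ∈ B then c • v else 0)))
        = ∫ t in B, c^2 * f t := by
      simp only [hgeq]
      rw [setIntegral_indicator hBmeas, Set.inter_eq_self_of_subset_right hBsub]
    rw [h1]
    have h2 : (∫ t in B, c^2 * f t) ≤ ∫ t in B, (-(c^2 * ε)) := by
      refine setIntegral_mono_on hintf (integrableOn_const hBfin.ne) hBmeas ?_
      intro t ht
      have := hBneg t ht
      nlinarith [sq_nonneg c]
    have h3 : (∫ t in B, (-(c^2 * ε)) : ℝ) = μB * (-(c^2 * ε)) := by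
      rw [setIntegral_const, smul_eq_mul, hμBdef, measureReal_def]
    have h4 : μB * (-(c^2 * ε)) = -(|r| + 1) := by
      rw [hc2]
      field_simp
    have : (∫ t in B, c^2 * f t) ≤ -(|r| + 1) := by rw [← h4, ← h3]; exact h2
    have habs : -(|r| + 1) < r := by
      have := abs_nonneg r
      have := neg_abs_le r
      linarith
    linarith
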